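/- arXiv:1410.2935 — 2 statements merged into one kernel-verified Lean document; each statement's English description precedes it below -/
import Mathlib

section
/- Let w=i_n⋯i_1 be a reverse lattice word and σ=std(w). Then the column reading word of the standard reverse tableau T_w equals σ^{-1}, written in one-line notation. -/
open scoped BigOperators

namespace CompJdt

/-! ### Compositions, partitions, diagrams -/

/-- A (strong) composition: a list of positive integers. -/
def IsComposition (α : List ℕ) : Prop := ∀ x ∈ α, 0 < x

/-- A partition, recorded bottom row first (French convention):
weakly decreasing list of positive integers. -/
def IsPartition (lam : List ℕ) : Prop := (∀ x ∈ lam, 0 < x) ∧ lam.Pairwise (· ≥ ·)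

/-- Box `(r, c)` (1-based row and column) belongs to the diagram of `α`
(row `r` has `α r` boxes). For reverse composition diagrams rows are counted
from the top; for partition diagrams (French convention) from the bottom. -/
abbrev InD (α : List ℕ) (r c : ℕ) : Prop := 1 ≤ r ∧ 1 ≤ c ∧ c ≤ α.getD (r - 1) 0

/-- Box `(r,c)` lies in the inner shape `β` of the skew reverse composition shape
`δ // β` (`β` drawn in the bottom-left corner of `δ`). -/
abbrev InInnerC (δ β : List ℕ) (r c : ℕ) : Prop :=
  δ.length - β.length < r ∧ 1 ≤ c ∧ c ≤ β.getD (r - (δ.length - β.length) - 1) 0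

/-- Box of the skew reverse composition shape `δ // β`. -/
abbrev InSkewC (δ β : List ℕ) (r c : ℕ) : Prop := InD δ r c ∧ ¬ InInnerC δ β r c

/-- Box of the skew partition shape `lam / mu` (French convention). -/
abbrev InSkewP (lam mu : List ℕ) (r c : ℕ) : Prop := InD lam r c ∧ ¬ InD mu r c

/-- There is an addable node in column `c` of the partition obtained by sorting `l`. -/
abbrev HasAddable (l : List ℕ) (c : ℕ) : Prop := c = 1 ∨ (c - 1) ∈ l

/-! ### Tableaux as fillings (zero outside the shape) -/

/-- Semistandard reverse composition tableau of skew shape `δ // β`: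
rows weakly decrease left to right, first-column entries strictly increase
top to bottom, triple rule. -/
def IsSSRCTSkew (δ β : List ℕ) (τ : ℕ → ℕ → ℕ) : Prop :=
  (∀ r c, ¬ InSkewC δ β r c → τ r c = 0) ∧
  (∀ r c, InSkewC δ β r c → 0 < τ r c) ∧
  (∀ r c, 1 ≤ c → InSkewC δ β r c → InSkewC δ β r (c+1) → τ r (c+1) ≤ τ r c) ∧
  (∀ r r', InSkewC δ β r 1 → InSkewC δ β r' 1 → r < r' → τ r 1 < τ r' 1) ∧
  (∀ i j k, 1 ≤ k → i < j → InSkewC δ β j (k+1) →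
     (InInnerC δ β i k ∨ (InSkewC δ β i k ∧ τ j (k+1) ≤ τ i k)) →
     (InInnerC δ β i (k+1) ∨ (InSkewC δ β i (k+1) ∧ τ j (k+1) < τ i (k+1))))

def IsSSRCT (α : List ℕ) (τ : ℕ → ℕ → ℕ) : Prop := IsSSRCTSkew α [] τ

/-- Standard reverse composition tableau of skew shape: a semistandard one whose
entries are a bijection onto `{1, …, |δ| - |β|}`. -/
def IsSRCTSkew (δ β : List ℕ) (τ : ℕ → ℕ → ℕ) : Prop :=
  IsSSRCTSkew δ β τ ∧
  (∀ r c, InSkewC δ β r c → τ r c ≤ δ.sum - β.sum) ∧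
  (∀ r c r' c', InSkewC δ β r c → InSkewC δ β r' c' → τ r c = τ r' c' → (r, c) = (r', c')) ∧
  (∀ m, 1 ≤ m → m ≤ δ.sum - β.sum → ∃ r c, InSkewC δ β r c ∧ τ r c = m)

def IsSRCT (α : List ℕ) (τ : ℕ → ℕ → ℕ) : Prop := IsSRCTSkew α [] τ

/-- Semistandard reverse tableau of skew partition shape (French convention):
rows weakly decrease left to right, columns strictly decrease bottom to top. -/
def IsSSRTSkew (lam mu : List ℕ) (T : ℕ → ℕ → ℕ) : Prop :=
  (∀ r c, ¬ InSkewP lam mu r c → T r c = 0) ∧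
  (∀ r c, InSkewP lam mu r c → 0 < T r c) ∧
  (∀ r c, 1 ≤ c → InSkewP lam mu r c → InSkewP lam mu r (c+1) → T r (c+1) ≤ T r c) ∧
  (∀ r c, 1 ≤ r → InSkewP lam mu r c → InSkewP lam mu (r+1) c → T (r+1) c < T r c)

def IsSSRT (lam : List ℕ) (T : ℕ → ℕ → ℕ) : Prop := IsSSRTSkew lam [] T

def IsSRTSkew (lam mu : List ℕ) (T : ℕ → ℕ → ℕ) : Prop :=
  IsSSRTSkew lam mu T ∧
  (∀ r c, InSkewP lam mu r c → T r c ≤ lam.sum - mu.sum) ∧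
  (∀ r c r' c', InSkewP lam mu r c → InSkewP lam mu r' c' → T r c = T r' c' → (r, c) = (r', c')) ∧
  (∀ m, 1 ≤ m → m ≤ lam.sum - mu.sum → ∃ r c, InSkewP lam mu r c ∧ T r c = m)

def IsSRT (lam : List ℕ) (T : ℕ → ℕ → ℕ) : Prop := IsSRTSkew lam [] T

/-! ### Operators on compositions -/

/-- Box removing operator `d_i`: subtract 1 from the rightmost part equal to `i`
(omit it if it becomes 0); undefined (`none`) if there is no such part. -/
def boxRemove (i : ℕ) : List ℕ → Option (List ℕ)
  | [] => none
  | a :: s =>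
    match boxRemove i s with
    | some s' => some (a :: s')
    | none => if a = i then some (if i = 1 then s else (i - 1) :: s) else none

/-- `vSeq k = d_1 ∘ d_2 ∘ ⋯ ∘ d_k` (apply `d_k` first). -/
def vSeq : ℕ → List ℕ → Option (List ℕ)
  | 0, α => some α
  | k+1, α => (boxRemove (k+1) α).bind (vSeq k)

/-- Jeu de taquin operator `u_i = a_i ∘ d_1 ∘ d_2 ∘ ⋯ ∘ d_{i-1}`. -/
def uOp (i : ℕ) (α : List ℕ) : Option (List ℕ) := (vSeq (i - 1) α).map (· ++ [i])

/-- Apply `u_{i_1}, …, u_{i_n}` in order (`l = [i_1, …, i_n]`), each application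
required to be defined. -/
def uSeq (l : List ℕ) (α : List ℕ) : Option (List ℕ) :=
  l.foldl (fun o i => o.bind (uOp i)) (some α)

/-- Cover relation of the poset `R_c`. -/
def CoverR (γ δ : List ℕ) : Prop := ∃ i, 0 < i ∧ uOp i γ = some δ

/-- Cover relation `β ⋖_c α` of the reverse composition poset `L_c`. -/
def CoverC (β α : List ℕ) : Prop :=
  α = 1 :: β ∨ ∃ k, k < β.length ∧ α = β.set k (β.getD k 0 + 1) ∧
    ∀ i < k, β.getD i 0 ≠ β.getD k 0

/-! ### Noncommutative symmetric functions -/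

/-- The algebra `NSym` of noncommutative symmetric functions: the free associative
`ℚ`-algebra on generators `h_1, h_2, …` (generator `i` is `h_i`). -/
abbrev NSym := FreeAlgebra ℚ ℕ

/-- `h_α = h_{α_1} ⋯ h_{α_k}`. -/
def hFun (α : List ℕ) : NSym := (α.map (FreeAlgebra.ι ℚ)).prod

/-- `α ⪰ β`: `α` is obtained by adding together adjacent parts of `β` in order. -/
def Coarsens (α β : List ℕ) : Prop :=
  ∃ L : List (List ℕ), (∀ l ∈ L, l ≠ []) ∧ L.flatten = β ∧ L.map List.sum = α

/-- Noncommutative ribbon Schur function `R_β`. -/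
noncomputable def Ribbon (β : List ℕ) : NSym :=
  ∑ᶠ α ∈ {α : List ℕ | Coarsens α β}, ((-1 : ℚ) ^ (β.length - α.length)) • hFun α

/-- `m` is a descent of the SRCT `τ` (of shape `α`): `m+1` lies weakly right of `m`. -/
def IsDescent (α : List ℕ) (τ : ℕ → ℕ → ℕ) (m : ℕ) : Prop :=
  ∃ r c r' c', InD α r c ∧ InD α r' c' ∧ τ r c = m ∧ τ r' c' = m + 1 ∧ c ≤ c'

/-- The descent composition of `τ` is `β`, i.e. the descent set of `τ` equals
`set(β) = {β_1, β_1+β_2, …}`. -/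
def HasDescentComp (α β : List ℕ) (τ : ℕ → ℕ → ℕ) : Prop :=
  ∀ m, IsDescent α τ m ↔ ∃ k, 1 ≤ k ∧ k < β.length ∧ (β.take k).sum = m

/-- `d_{αβ}`: the number of SRCTs of shape `α` with descent composition `β`. -/
noncomputable def dCount (α β : List ℕ) : ℕ :=
  Nat.card {τ : ℕ → ℕ → ℕ // IsSRCT α τ ∧ HasDescentComp α β τ}

/-! ### words, standardization, variant Robinson–Schensted -/

/-- Reverse lattice word: in every suffix, `j+1` occurs at most as often as `j`. -/
def ReverseLattice (w : List ℕ) : Prop :=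
  (∀ x ∈ w, 0 < x) ∧ ∀ s ∈ w.tails, ∀ j : ℕ, s.count (j + 2) ≤ s.count (j + 1)

/-- Standardization of a word (read left to right), in one-line notation. -/
def stdList (w : List ℕ) : List ℕ :=
  (List.range w.length).map (fun p =>
    (w.filter (fun x => decide (x < w.getD p 0))).length +
    ((w.take (p + 1)).filter (fun x => decide (x = w.getD p 0))).length)

/-- Inverse of a permutation given in one-line notation. -/
def invList (σ : List ℕ) : List ℕ :=
  (List.range σ.length).map (fun k => σ.idxOf (k + 1) + 1)

/-- Row insertion for reverse tableaux: `y` replaces (and bumps) the greatest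
entry smaller than `y`, or is appended at the end of the row. -/
def insertRow (y : ℕ) : List ℕ → List ℕ × Option ℕ
  | [] => ([y], none)
  | a :: s =>
    if a < y then (y :: s, some a)
    else
      let p := insertRow y s
      (a :: p.1, p.2)

/-- Insert `y` into a reverse tableau (rows listed bottom to top); returns the new
tableau and the (1-based) index of the row where a new box was created. -/
def insertT (y : ℕ) : List (List ℕ) → List (List ℕ) × ℕ
  | [] => ([[y]], 1)
  | row :: rest =>
    match insertRow y row with
    | (row', none) => (row' :: rest, 1)
    | (row', some b) =>
      let p := insertT b rest
      (row' :: p.1, p.2 + 1)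

/-- Append the value `v` at the end of row `r` of a tableau. -/
def addEntryAt (r v : ℕ) (Q : List (List ℕ)) : List (List ℕ) :=
  if r ≤ Q.length then Q.set (r - 1) (Q.getD (r - 1) [] ++ [v]) else Q ++ [[v]]

/-- Variant Robinson–Schensted: insert the values in order; the `i`-th insertion
records `n - i + 1` in the recording tableau. -/
def RSaux : List ℕ → ℕ → List (List ℕ) × List (List ℕ) → List (List ℕ) × List (List ℕ)
  | [], _, pq => pq
  | y :: rest, v, (P, Q) =>
    let p := insertT y P
    RSaux rest (v - 1) (p.1, addEntryAt p.2 v Q)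

/-- Insertion tableau `P(σ)` of the variant Robinson–Schensted algorithm. -/
def PTab (σ : List ℕ) : List (List ℕ) := (RSaux σ σ.length ([], [])).1

/-- Recording tableau `Q(σ)` of the variant Robinson–Schensted algorithm. -/
def QTab (σ : List ℕ) : List (List ℕ) := (RSaux σ σ.length ([], [])).2

/-- Add a box (with value `v`) at the addable node in column `i` of a tableau
given by its rows (bottom to top). -/
def addBoxCol (i v : ℕ) : List (List ℕ) → List (List ℕ)
  | [] => [[v]]
  | row :: rest =>
    if row.length + 1 = i then (row ++ [v]) :: rest else row :: addBoxCol i v rest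

/-- The SRT `T_w` associated with a reverse lattice word `w = i_n ⋯ i_1` (read left
to right): the box added at step `k` (in column `i_k`) receives entry `n - k + 1`. -/
def TwTab (w : List ℕ) : List (List ℕ) :=
  (List.range w.length).foldl
    (fun t k => addBoxCol (w.reverse.getD k 0) (w.length - k) t) []

/-- Column `c` of a tableau given by its list of rows (bottom to top). -/
def colA (t : List (List ℕ)) (c : ℕ) : List ℕ := t.filterMap (fun row => row[c - 1]?)

/-- Column reading word: entries of each column in increasing order, columns left
to right. -/
def colWordL (t : List (List ℕ)) : List ℕ :=
  ((List.range ((t.map List.length).foldr max 0)).map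
    (fun c0 => (colA t (c0 + 1)).insertionSort (· ≤ ·))).flatten

/-- The filling function of a tableau given by its list of rows. -/
def tabFun (t : List (List ℕ)) (r c : ℕ) : ℕ := (t.getD (r - 1) []).getD (c - 1) 0

/-- The shape of a tableau given by its list of rows. -/
def tabShape (t : List (List ℕ)) : List ℕ := t.map List.length

/-- Column reading word of a filling with row lengths bounded by the shape `δ`:
positive entries of each column in increasing order, columns left to right. -/
def colWordF (δ : List ℕ) (τ : ℕ → ℕ → ℕ) : List ℕ :=
  ((List.range (δ.foldr max 0)).map (fun c0 =>
    (((List.range δ.length).map (fun r0 => τ (r0 + 1) (c0 + 1))).filter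
        (fun v => decide (0 < v))).insertionSort (· ≤ ·))).flatten

/-! ### Backward jeu de taquin slides on (skew) SSRT -/

/-- `(r, c)` is an addable node of the partition `mu`. -/
abbrev AddableAt (mu : List ℕ) (r c : ℕ) : Prop :=
  1 ≤ r ∧ c = mu.getD (r - 1) 0 + 1 ∧ (r = 1 ∨ c ≤ mu.getD (r - 2) 0)

/-- One step of a backward slide: the empty box at `c` is filled from the smaller
of the entries below and to the left (below on a tie). -/
def slideStepB (lam mu : List ℕ) (T : ℕ → ℕ → ℕ) (c : ℕ × ℕ) : ℕ × ℕ :=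
  if InSkewP lam mu (c.1 - 1) c.2 then
    if InSkewP lam mu c.1 (c.2 - 1) then
      if T (c.1 - 1) c.2 ≤ T c.1 (c.2 - 1) then (c.1 - 1, c.2) else (c.1, c.2 - 1)
    else (c.1 - 1, c.2)
  else (c.1, c.2 - 1)

/-- Backward slide loop; also records (in a list) the entries that move
horizontally.  Returns (new filling, final empty box, horizontal entries). -/
def bSlideAux (lam mu : List ℕ) :
    ℕ → (ℕ → ℕ → ℕ) → ℕ × ℕ → List ℕ → (ℕ → ℕ → ℕ) × (ℕ × ℕ) × List ℕ
  | 0, T, c, H => (T, c, H)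
  | fuel+1, T, c, H =>
    if AddableAt mu c.1 c.2 then ((fun r cc => if (r, cc) = c then 0 else T r cc), c, H)
    else
      let c' := slideStepB lam mu T c
      bSlideAux lam mu fuel
        (fun r cc => if (r, cc) = c then T c'.1 c'.2 else T r cc) c'
        (if c'.1 = c.1 then T c'.1 c'.2 :: H else H)

/-- Backward jeu de taquin slide `jdt_{j₀}` starting at the addable node of `lam`
in column `j₀`, for a filling of the skew shape `lam / mu`. Returns the new
filling, the box added to the inner shape, and the multiset (as a list) of
entries that moved horizontally. -/
def jdtB (lam mu : List ℕ) (j0 : ℕ) (T : ℕ → ℕ → ℕ) :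
    (ℕ → ℕ → ℕ) × (ℕ × ℕ) × List ℕ :=
  bSlideAux lam mu (lam.length + j0 + 2) T
    (lam.countP (fun p => decide (j0 ≤ p)) + 1, j0) []

/-- Add a box at the addable node of the partition `lam` in column `c`. -/
def addBoxP (lam : List ℕ) (c : ℕ) : List ℕ :=
  let r := lam.countP (fun p => decide (c ≤ p))
  if r < lam.length then lam.set r (lam.getD r 0 + 1) else lam ++ [1]

/-- Add a box to the partition `mu` at the end of row `r`. -/
def addBoxRow (mu : List ℕ) (r : ℕ) : List ℕ :=
  if r ≤ mu.length then mu.set (r - 1) (mu.getD (r - 1) 0 + 1) else mu ++ [1]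

/-- Iterate backward jdt slides `jdt_{j}` (columns taken from the list in order),
tracking outer shape, inner shape and filling. -/
def jdtIter : List ℕ → List ℕ × List ℕ × (ℕ → ℕ → ℕ) → List ℕ × List ℕ × (ℕ → ℕ → ℕ)
  | [], s => s
  | j :: rest, (lam, mu, T) =>
    let res := jdtB lam mu j T
    jdtIter rest (addBoxP lam j, addBoxRow mu res.2.1.1, res.1)

/-- Validity of a sequence of slide columns on a partition: at each step, the
current outer shape has an addable node in the required column. -/
def ValidSeqP : List ℕ → List ℕ → Prop
  | [], _ => True
  | j :: rest, lam => 0 < j ∧ HasAddable lam j ∧ ValidSeqP rest (addBoxP lam j)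

/-! ### `f`, `tjdt` -/

/-- The row of `f_{i+1}(T)`: the largest row `r` with `T r i < T (r-1) (i+1)`
(with the convention `T 0 s = ∞`, i.e. boxes absent above count as `∞`). -/
def fRow (lam : List ℕ) (T : ℕ → ℕ → ℕ) (i : ℕ) : ℕ :=
  ((List.range (lam.length + 1)).filter (fun r =>
    decide (InD lam r i ∧ (¬ InD lam (r - 1) (i + 1) ∨ T r i < T (r - 1) (i + 1))))).foldr
    max 0

/-- `tjdt_{i+1}(T)`: delete the entry `f_{i+1}(T)` from column `i` and slide every
entry of column `i` above it down one row. -/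
def tjdtFun (lam : List ℕ) (T : ℕ → ℕ → ℕ) (i : ℕ) : ℕ → ℕ → ℕ :=
  fun p q => if q = i ∧ fRow lam T i ≤ p then T (p + 1) q else T p q

/-- The shape of `tjdt_{i+1}(T)`: remove the topmost box of column `i`. -/
def tjdtShape (lam : List ℕ) (i : ℕ) : List ℕ :=
  let m := lam.countP (fun p => decide (i ≤ p))
  (lam.set (m - 1) (lam.getD (m - 1) 0 - 1)).filter (fun x => decide (x ≠ 0))

/-! ### `φ`, `Φ`, `μ` on SSRCT -/

/-- The index `r₁`: the bottommost (largest index) row of `α` of size `i`. -/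
def r1? (α : List ℕ) (i : ℕ) : Option ℕ :=
  let l := (List.range (α.length + 1)).filter (fun r => decide (1 ≤ r ∧ α.getD (r - 1) 0 = i))
  if l = [] then none else some (l.foldr max 0)

/-- Next index: the greatest `r < rp` with `τ r i > τ rp i ≥ τ r (i+1)`. -/
def nextR (τ : ℕ → ℕ → ℕ) (i rp : ℕ) : Option ℕ :=
  let l := (List.range rp).filter (fun r =>
    decide (1 ≤ r ∧ τ rp i < τ r i ∧ τ r (i + 1) ≤ τ rp i))
  if l = [] then none else some (l.foldr max 0)

def rChainAux (τ : ℕ → ℕ → ℕ) (i : ℕ) : ℕ → ℕ → List ℕ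
  | 0, r => [r]
  | fuel+1, r =>
    match nextR τ i r with
    | none => [r]
    | some r' => r :: rChainAux τ i fuel r'

/-- The list `[r₁, …, r_k]` used by `φ_{i+1}`. -/
def rChain (α : List ℕ) (τ : ℕ → ℕ → ℕ) (i : ℕ) : List ℕ :=
  match r1? α i with
  | none => []
  | some r1 => rChainAux τ i r1 r1

/-- The filling `φ_{i+1}(τ)`: entry of box `(r_j, i)` is replaced by that of box
`(r_{j-1}, i)` (so `τ (r_k) i` exits), and box `(r₁, i)` is removed. -/
def phiFun (α : List ℕ) (τ : ℕ → ℕ → ℕ) (i : ℕ) : ℕ → ℕ → ℕ :=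
  fun r c =>
    let rs := rChain α τ i
    if c = i ∧ r ∈ rs then
      (if rs.idxOf r = 0 then 0 else τ (rs.getD (rs.idxOf r - 1) 0) i)
    else τ r c

/-- The entry that exits the tableau when applying `φ_{i+1}`. -/
def exitEnt (α : List ℕ) (τ : ℕ → ℕ → ℕ) (i : ℕ) : ℕ :=
  match (rChain α τ i).getLast? with
  | some rk => τ rk i
  | none => 0

/-- `Φ_{m+1} = φ_2 ∘ φ_3 ∘ ⋯ ∘ φ_{m+1}` together with shape and the list of
exited entries: `PhiAux m (α, τ, [])` computes `Φ_{m+1}(τ)`. -/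
def PhiAux : ℕ → List ℕ × (ℕ → ℕ → ℕ) × List ℕ → List ℕ × (ℕ → ℕ → ℕ) × List ℕ
  | 0, s => s
  | m+1, (α, τ, H) =>
    PhiAux m ((boxRemove (m+1) α).getD α, phiFun α τ (m+1), exitEnt α τ (m+1) :: H)

/-- The largest entry of a filling of shape `α`. -/
def maxEnt (α : List ℕ) (τ : ℕ → ℕ → ℕ) : ℕ :=
  ((List.range α.length).map (fun r0 =>
    ((List.range (α.getD r0 0)).map (fun c0 => τ (r0 + 1) (c0 + 1))).foldr max 0)).foldr max 0

/-- Backward jeu de taquin slide `μ_i` on a straight-shape SSRCT `τ` of shape `α`: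
compute `Φ_i(τ)` (of shape `γ`), then add a bottom row of length `i` whose first
box is the inner box `(1)` and whose remaining boxes carry the exited entries in
decreasing order.  Returns the outer shape `(γ, i)` and the filling (zero on the
inner box). -/
def muFun (α : List ℕ) (τ : ℕ → ℕ → ℕ) (i : ℕ) : List ℕ × (ℕ → ℕ → ℕ) :=
  let res := PhiAux (i - 1) (α, τ, [])
  let γ := res.1
  let τ' := res.2.1
  let Hs := res.2.2.insertionSort (· ≥ ·)
  (γ ++ [i], fun r c =>
    if r = γ.length + 1 then (if 2 ≤ c ∧ c ≤ i then Hs.getD (c - 2) 0 else 0)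
    else τ' r c)

/-- `μ_i` with the convention that the vacated bottom-left corner is filled with a
new largest entry `max(τ) + 1`, so the result is again of straight shape. -/
def muFunMax (α : List ℕ) (τ : ℕ → ℕ → ℕ) (i : ℕ) : List ℕ × (ℕ → ℕ → ℕ) :=
  let res := PhiAux (i - 1) (α, τ, [])
  let γ := res.1
  let τ' := res.2.1
  let Hs := res.2.2.insertionSort (· ≥ ·)
  (γ ++ [i], fun r c =>
    if r = γ.length + 1 then
      (if c = 1 then maxEnt α τ + 1 else if 2 ≤ c ∧ c ≤ i then Hs.getD (c - 2) 0 else 0)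
    else τ' r c)

/-- Apply `μ_{i_1}, …, μ_{i_n}` (under the `max + 1` convention) to the empty SSRCT. -/
def muSeqMax (l : List ℕ) : List ℕ × (ℕ → ℕ → ℕ) :=
  l.foldl (fun p i => muFunMax p.1 p.2 i) ([], fun _ _ => 0)

/-- The canonical tableau `τ_α`: the `r`-th row from the top contains
`1 + Σ_{i<r} α_i, …, Σ_{i≤r} α_i` written right to left. -/
def canonTab (α : List ℕ) (r c : ℕ) : ℕ :=
  if InD α r c then (α.take r).sum + 1 - c else 0

/-- The inner shape of a skew filling: row lengths of the zero region inside `δ`. -/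
def innerOf (δ : List ℕ) (τ : ℕ → ℕ → ℕ) : List ℕ :=
  ((List.range δ.length).map (fun r0 =>
    ((List.range (δ.getD r0 0)).filter (fun c0 => decide (τ (r0 + 1) (c0 + 1) = 0))).length)).filter
    (fun x => decide (x ≠ 0))

/-- `μ_i` on a skew SSRCT (outer shape `δ`, inner boxes the zero region): complete
the inner shape with entries strictly larger than every entry, apply `μ_i`, and
retain only the original entries. -/
def muSkew (δ : List ℕ) (τ : ℕ → ℕ → ℕ) (i : ℕ) : List ℕ × (ℕ → ℕ → ℕ) :=
  let β := innerOf δ τ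
  let M := maxEnt δ τ
  let off := δ.length - β.length
  let full : ℕ → ℕ → ℕ := fun r c =>
    if InD δ r c ∧ τ r c = 0 then M + canonTab β (r - off) c else τ r c
  let res := muFun δ full i
  (res.1, fun r c => if M < res.2 r c then 0 else res.2 r c)

/-- Iterate `μ` slides on a (possibly skew) SSRCT. -/
def muIterSkew : List ℕ → List ℕ × (ℕ → ℕ → ℕ) → List ℕ × (ℕ → ℕ → ℕ)
  | [], p => p
  | j :: rest, (δ, τ) => muIterSkew rest (muSkew δ τ j)

/-- Validity of a sequence of `μ` slides on a composition: at each step the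
sorted outer shape has an addable node in the required column. -/
def ValidSeqU : List ℕ → List ℕ → Prop
  | [], _ => True
  | j :: rest, γ => 0 < j ∧ HasAddable γ j ∧ ValidSeqU rest ((uOp j γ).getD γ)

/-! ### Forward slides and evacuation -/

/-- One step of a forward slide: the empty box is filled from the larger of the
entries above and to the right (above on a tie). -/
def fStep (lam : List ℕ) (T : ℕ → ℕ → ℕ) (c : ℕ × ℕ) : ℕ × ℕ :=
  if InD lam (c.1 + 1) c.2 then
    if InD lam c.1 (c.2 + 1) then
      if T c.1 (c.2 + 1) ≤ T (c.1 + 1) c.2 then (c.1 + 1, c.2) else (c.1, c.2 + 1)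
    else (c.1 + 1, c.2)
  else (c.1, c.2 + 1)

/-- Forward slide loop; returns the final filling and the vacated box. -/
def fSlideAux (lam : List ℕ) :
    ℕ → (ℕ → ℕ → ℕ) → ℕ × ℕ → (ℕ → ℕ → ℕ) × (ℕ × ℕ)
  | 0, T, c => (T, c)
  | fuel+1, T, c =>
    if InD lam (c.1 + 1) c.2 ∨ InD lam c.1 (c.2 + 1) then
      let c' := fStep lam T c
      fSlideAux lam fuel (fun r cc => if (r, cc) = c then T c'.1 c'.2 else T r cc) c'
    else ((fun r cc => if (r, cc) = c then 0 else T r cc), c)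

/-- Remove a box from row `r` of the partition `lam`. -/
def removeAtRow (r : ℕ) (lam : List ℕ) : List ℕ :=
  (lam.set (r - 1) (lam.getD (r - 1) 0 - 1)).filter (fun x => decide (x ≠ 0))

/-- Evacuation loop: repeatedly delete the entry `a` at `(1,1)`, forward-slide,
and record `n - a + 1` at the vacated removable node. -/
def evacAux (n : ℕ) : ℕ → List ℕ → (ℕ → ℕ → ℕ) → (ℕ → ℕ → ℕ) → (ℕ → ℕ → ℕ)
  | 0, _, _, U => U
  | steps+1, lam, T, U =>
    let a := T 1 1
    let res := fSlideAux lam (lam.length + lam.sum + 2)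
      (fun r c => if (r, c) = (1, 1) then 0 else T r c) (1, 1)
    evacAux n steps (removeAtRow res.2.1 lam) res.1
      (fun r c => if (r, c) = res.2 then n - a + 1 else U r c)

/-- Evacuation `e(T)` of a standard reverse tableau of shape `lam ⊢ n`. -/
def evac (n : ℕ) (lam : List ℕ) (T : ℕ → ℕ → ℕ) : ℕ → ℕ → ℕ :=
  evacAux n n lam T (fun _ _ => 0)

/-! ### Chains and Littlewood–Richardson coefficients -/

/-- Number of maximal chains from `α` to `β` in the poset `R_c`. -/
noncomputable def chainCount (α β : List ℕ) : ℕ :=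
  Nat.card {c : List (List ℕ) // c.Chain' CoverR ∧ c.head? = some α ∧ c.getLast? = some β}

/-- A skew SRCT of shape `δ // β` rectifies to the canonical tableau `τ_α`, i.e.
`ρ⁻¹(P(w_τ)) = τ_α` (expressed via matching column multisets). -/
def RectifiesToCanon (δ β α : List ℕ) (τ : ℕ → ℕ → ℕ) : Prop :=
  ∀ c v, 0 < v →
    Nat.card {r : ℕ // InD α r c ∧ canonTab α r c = v} =
      (colA (PTab (colWordF δ τ)) c).count v

/-- The noncommutative Littlewood–Richardson coefficient `C^β_{αγ}`: the number of
SRCTs of shape `β // γ` that rectify to the canonical tableau `τ_α`. -/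
noncomputable def Ccoef (α γ β : List ℕ) : ℕ :=
  Nat.card {τ : ℕ → ℕ → ℕ //
    Relation.TransGen CoverC γ β ∧ IsSRCTSkew β γ τ ∧ RectifiesToCanon β γ α τ}

end CompJdt

namespace CompJdt

open List

def ins (m x : ℕ) (l : List ℕ) : List ℕ := l.take m ++ x :: l.drop m

lemma ins_append (u v : List ℕ) (x : ℕ) : ins u.length x (u ++ v) = u ++ x :: v := by
  simp [ins, List.take_left, List.drop_left]

lemma ins_add (p : List ℕ) (k x : ℕ) (v : List ℕ) :
    ins (p.length + k) x (p ++ v) = p ++ ins k x v := by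
  simp [ins, List.take_append, List.drop_append, List.append_assoc, List.take_of_length_le,
    List.drop_of_length_le]

lemma ins_length_self (l : List ℕ) (x : ℕ) : ins l.length x l = l ++ [x] := by
  simp [ins]

lemma length_ins (m x : ℕ) (l : List ℕ) (h : m ≤ l.length) :
    (ins m x l).length = l.length + 1 := by
  simp [ins]; omega

lemma flatten_set (P : List (List ℕ)) (j : ℕ) (x : ℕ) (b : List ℕ) (hj : j < P.length)
    (hb : P[j] = b) :
    (P.set j (x :: b)).flatten = ins ((P.take j).flatten).length x P.flatten := by
  induction P generalizing j with
  | nil => simp at hj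
  | cons p P ih =>
    cases j with
    | zero =>
      simp at hb
      subst hb
      simp [ins]
    | succ j =>
      simp only [List.set_cons_succ, List.flatten_cons, List.take_succ_cons]
      rw [ih j (by simpa using hj) (by simpa using hb)]
      rw [List.length_append, ins_add]

lemma eq_of_perm_of_sorted_aux {l₁ l₂ : List ℕ} (hp : l₁.Perm l₂)
    (h1 : l₁.Pairwise (· ≤ ·)) (h2 : l₂.Pairwise (· ≤ ·)) : l₁ = l₂ :=
  List.Perm.eq_of_pairwise' h1 h2 hp

lemma sort_append_min (l : List ℕ) (x : ℕ) (h : ∀ y ∈ l, x ≤ y) :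
    (l ++ [x]).insertionSort (· ≤ ·) = x :: l.insertionSort (· ≤ ·) := by
  apply eq_of_perm_of_sorted_aux
  · refine (List.perm_insertionSort _ _).trans ?_
    refine ((List.perm_append_comm).trans ?_)
    exact (List.perm_insertionSort _ l).symm.cons x
  · exact List.pairwise_insertionSort _ _
  · refine List.pairwise_cons.mpr ⟨fun b hb => ?_, List.pairwise_insertionSort _ _⟩
    exact h b ((List.perm_insertionSort _ l).mem_iff.mp hb)

lemma sort_map_succ (l : List ℕ) :
    (l.map (· + 1)).insertionSort (· ≤ ·) = (l.insertionSort (· ≤ ·)).map (· + 1) := by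
  apply eq_of_perm_of_sorted_aux
  · exact (List.perm_insertionSort _ _).trans ((List.perm_insertionSort _ l).map _).symm
  · exact List.pairwise_insertionSort _ _
  · exact List.Pairwise.map _ (fun h => by omega) (List.pairwise_insertionSort _ l)

lemma indexOf_map_inj (f : ℕ → ℕ) (hf : Function.Injective f) (l : List ℕ) (v : ℕ) :
    (l.map f).idxOf (f v) = l.idxOf v := by
  induction l with
  | nil => simp
  | cons a l ih =>
    simp only [List.map_cons, List.idxOf_cons]
    by_cases h : a = v
    · simp [h]
    · have h1 : (f a == f v) = false := by
        simp only [beq_eq_false_iff_ne, ne_eq]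
        exact fun hc => h (hf hc)
      have h2 : (a == v) = false := by simpa using h
      simp [h1, h2, ih]

lemma filter_lt_add_eq (w : List ℕ) (v : ℕ) :
    (w.filter (fun x => decide (x < v))).length + (w.filter (fun x => decide (x = v))).length
      = (w.filter (fun x => decide (x ≤ v))).length := by
  induction w with
  | nil => simp
  | cons b w ih =>
    simp only [List.filter_cons]
    rcases lt_trichotomy b v with h | h | h
    · simp [h, h.le, h.ne]; omega
    · simp [h]; omega
    · have hne : ¬ (b = v) := by omega
      simp [Nat.not_lt.mpr h.le, hne, Nat.not_le.mpr h, ih]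

lemma filter_length_mono (w : List ℕ) (p q : ℕ → Bool) (h : ∀ x, p x = true → q x = true) :
    (w.filter p).length ≤ (w.filter q).length := by
  induction w with
  | nil => simp
  | cons b w ih =>
    simp only [List.filter_cons]
    by_cases hb : p b
    · simp [hb, h b hb]; omega
    · by_cases hb' : q b <;> simp [hb, hb'] <;> omega


/-! ### addBoxCol / colA lemmas -/

def Addable (a : ℕ) (t : List (List ℕ)) : Prop := a = 1 ∨ ∃ row ∈ t, row.length + 1 = a

def incr (t : List (List ℕ)) : List (List ℕ) := t.map (List.map (· + 1))

lemma addable_nil (a : ℕ) (h : Addable a []) : a = 1 := by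
  rcases h with h | ⟨row, hr, _⟩
  · exact h
  · simp at hr

lemma addable_tail {a : ℕ} {row : List ℕ} {t : List (List ℕ)} (h : Addable a (row :: t))
    (hrow : ¬ row.length + 1 = a) : Addable a t := by
  rcases h with h | ⟨r, hr, hlen⟩
  · exact Or.inl h
  · rcases List.mem_cons.mp hr with rfl | hr'
    · exact absurd hlen hrow
    · exact Or.inr ⟨r, hr', hlen⟩

lemma colA_nil (c : ℕ) : colA [] c = [] := rfl

lemma colA_cons (row : List ℕ) (t : List (List ℕ)) (c : ℕ) :
    colA (row :: t) c = (row[(c-1)]?).toList ++ colA t c := by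
  rw [colA, List.filterMap_cons]
  cases h : row[(c-1)]? <;> simp [colA, h]

lemma get?_concat (l : List ℕ) (v : ℕ) (i : ℕ) :
    (l ++ [v])[i]? = if i = l.length then some v else l[i]? := by
  split
  · next h => subst h; exact List.getElem?_concat_length
  · next h =>
      rcases lt_or_gt_of_ne h with h1 | h1
      · exact List.getElem?_append_left h1
      · rw [List.getElem?_eq_none_iff.mpr (by simp; omega), List.getElem?_eq_none_iff.mpr (by omega)]

lemma colA_eq_nil (t : List (List ℕ)) (c : ℕ) (h : ∀ row ∈ t, row.length < c) :
    colA t c = [] := by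
  induction t with
  | nil => rfl
  | cons row t ih =>
    rw [colA_cons, List.getElem?_eq_none_iff.mpr (by have := h row (List.mem_cons_self); omega),
      ih (fun r hr => h r (List.mem_cons_of_mem _ hr))]
    rfl

lemma colA_addBoxCol_self (a v : ℕ) (t : List (List ℕ)) (hadd : Addable a t)
    (hsort : (t.map List.length).Pairwise (· ≥ ·)) :
    colA (addBoxCol a v t) a = colA t a ++ [v] := by
  induction t with
  | nil =>
    have ha : a = 1 := addable_nil a hadd
    subst ha
    simp [addBoxCol, colA]
  | cons row t ih =>
    simp only [addBoxCol]
    by_cases h : row.length + 1 = a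
    · rw [if_pos h]
      have h1 : row[(a-1)]? = none := List.getElem?_eq_none_iff.mpr (by omega)
      have h2 : (row ++ [v])[a-1]? = some v := by
        rw [get?_concat, if_pos (by omega)]
      have h3 : colA t a = [] := colA_eq_nil _ _ (fun r hr => by
        have := (List.pairwise_cons.mp hsort).1 r.length (List.mem_map_of_mem hr)
        omega)
      rw [colA_cons, colA_cons, h1, h2, h3]
      simp
    · rw [if_neg h, colA_cons, colA_cons,
        ih (addable_tail hadd h) (List.pairwise_cons.mp hsort).2, List.append_assoc]

lemma colA_addBoxCol_ne (a v c : ℕ) (t : List (List ℕ)) (hc : 1 ≤ c) (hca : c ≠ a)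
    (hadd : Addable a t) :
    colA (addBoxCol a v t) c = colA t c := by
  induction t with
  | nil =>
    have ha : a = 1 := addable_nil a hadd
    have hv : [v][(c-1)]? = none := List.getElem?_eq_none_iff.mpr (by simp; omega)
    simp only [addBoxCol]
    rw [colA_cons, hv]
    rfl
  | cons row t ih =>
    simp only [addBoxCol]
    by_cases h : row.length + 1 = a
    · rw [if_pos h, colA_cons, colA_cons]
      congr 1
      rw [get?_concat, if_neg (by omega)]
    · rw [if_neg h, colA_cons, colA_cons, ih (addable_tail hadd h)]

lemma addBoxCol_lengths (a v : ℕ) (t : List (List ℕ)) (hadd : Addable a t) :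
    ∀ L ∈ (addBoxCol a v t).map List.length, L = a ∨ L ∈ t.map List.length := by
  induction t with
  | nil =>
    have ha : a = 1 := addable_nil a hadd
    intro L hL
    simp [addBoxCol] at hL
    left; omega
  | cons row t ih =>
    intro L hL
    simp only [addBoxCol] at hL
    by_cases h : row.length + 1 = a
    · rw [if_pos h] at hL
      simp only [List.map_cons, List.mem_cons, List.length_append, List.length_singleton] at hL
      rcases hL with h1 | h1
      · left; omega
      · right; simp only [List.map_cons, List.mem_cons]; right; exact h1
    · rw [if_neg h] at hL
      simp only [List.map_cons, List.mem_cons] at hL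
      rcases hL with h1 | h1
      · right; simp [h1]
      · rcases ih (addable_tail hadd h) L h1 with h2 | h2
        · left; exact h2
        · right; simp only [List.map_cons, List.mem_cons]; right; exact h2

lemma addBoxCol_ne_nil (a v : ℕ) (t : List (List ℕ)) (hne : ∀ row ∈ t, row ≠ []) :
    ∀ row ∈ addBoxCol a v t, row ≠ [] := by
  induction t with
  | nil => intro row hr; simp [addBoxCol] at hr; simp [hr]
  | cons row t ih =>
    intro r hr
    simp only [addBoxCol] at hr
    by_cases h : row.length + 1 = a
    · rw [if_pos h] at hr
      rcases List.mem_cons.mp hr with rfl | hr'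
      · simp
      · exact hne r (List.mem_cons_of_mem _ hr')
    · rw [if_neg h] at hr
      rcases List.mem_cons.mp hr with rfl | hr'
      · exact hne r (List.mem_cons_self)
      · exact ih (fun r' hr' => hne r' (List.mem_cons_of_mem _ hr')) r hr'

lemma addBoxCol_pos (a v : ℕ) (t : List (List ℕ)) (hv : 1 ≤ v)
    (hpos : ∀ row ∈ t, ∀ x ∈ row, 1 ≤ x) :
    ∀ row ∈ addBoxCol a v t, ∀ x ∈ row, 1 ≤ x := by
  induction t with
  | nil =>
    intro row hr x hx
    simp [addBoxCol] at hr
    subst hr; simp at hx; omega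
  | cons row t ih =>
    intro r hr x hx
    simp only [addBoxCol] at hr
    by_cases h : row.length + 1 = a
    · rw [if_pos h] at hr
      rcases List.mem_cons.mp hr with rfl | hr'
      · rcases List.mem_append.mp hx with h1 | h1
        · exact hpos row (List.mem_cons_self) x h1
        · simp at h1; omega
      · exact hpos r (List.mem_cons_of_mem _ hr') x hx
    · rw [if_neg h] at hr
      rcases List.mem_cons.mp hr with rfl | hr'
      · exact hpos r (List.mem_cons_self) x hx
      · exact ih (fun r' h' => hpos r' (List.mem_cons_of_mem _ h')) r hr' x hx

lemma addBoxCol_sorted (a v : ℕ) (t : List (List ℕ)) (hadd : Addable a t)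
    (hne : ∀ row ∈ t, row ≠ [])
    (hsort : (t.map List.length).Pairwise (· ≥ ·)) :
    ((addBoxCol a v t).map List.length).Pairwise (· ≥ ·) := by
  induction t with
  | nil => simp [addBoxCol]
  | cons row t ih =>
    obtain ⟨hhead, htail⟩ := List.pairwise_cons.mp hsort
    simp only [addBoxCol]
    by_cases h : row.length + 1 = a
    · rw [if_pos h]
      simp only [List.map_cons, List.length_append, List.length_singleton]
      refine List.pairwise_cons.mpr ⟨?_, htail⟩
      intro b hb
      have := hhead b hb
      omega
    · rw [if_neg h]
      have hadd' : Addable a t := addable_tail hadd h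
      have hlow : a ≤ row.length := by
        rcases hadd with h1 | ⟨r, hr, hlen⟩
        · have h2 := hne row (List.mem_cons_self)
          have h3 := List.length_pos_iff.mpr h2
          omega
        · rcases List.mem_cons.mp hr with rfl | hr'
          · omega
          · have := hhead r.length (List.mem_map_of_mem hr')
            omega
      simp only [List.map_cons]
      refine List.pairwise_cons.mpr
        ⟨?_, ih hadd' (fun r hr => hne r (List.mem_cons_of_mem _ hr)) htail⟩
      intro b hb
      rcases addBoxCol_lengths a v t hadd' b hb with rfl | hb'
      · omega
      · exact hhead b hb'

/-! ### colMax and colWordL -/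

def colMax (t : List (List ℕ)) : ℕ := (t.map List.length).foldr max 0

lemma colMax_cons (row : List ℕ) (t : List (List ℕ)) :
    colMax (row :: t) = max row.length (colMax t) := rfl

lemma colMax_addBoxCol (a v : ℕ) (t : List (List ℕ)) (hadd : Addable a t) :
    colMax (addBoxCol a v t) = max a (colMax t) := by
  induction t with
  | nil =>
    have ha : a = 1 := addable_nil a hadd
    subst ha
    simp [colMax, addBoxCol]
  | cons row t ih =>
    simp only [addBoxCol]
    by_cases h : row.length + 1 = a
    · rw [if_pos h, colMax_cons, colMax_cons]
      have h1 : (row ++ [v]).length = a := by simp; omega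
      rw [h1, ← Nat.max_assoc, Nat.max_eq_left (by omega : row.length ≤ a)]
    · rw [if_neg h, colMax_cons, colMax_cons, ih (addable_tail hadd h),
        Nat.max_left_comm]

lemma length_le_colMax (t : List (List ℕ)) : ∀ row ∈ t, row.length ≤ colMax t := by
  induction t with
  | nil => simp
  | cons row t ih =>
    intro r hr
    rcases List.mem_cons.mp hr with rfl | hr'
    · rw [colMax_cons]; exact Nat.le_max_left _ _
    · rw [colMax_cons]; exact le_trans (ih r hr') (Nat.le_max_right _ _)

lemma colMax_incr (t : List (List ℕ)) : colMax (incr t) = colMax t := by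
  simp [colMax, incr, List.map_map, Function.comp_def]

lemma colA_incr (t : List (List ℕ)) (c : ℕ) : colA (incr t) c = (colA t c).map (· + 1) := by
  simp [colA, incr, List.filterMap_map, List.map_filterMap, Function.comp_def, List.getElem?_map]

lemma colWordL_def (t : List (List ℕ)) :
    colWordL t
      = ((List.range (colMax t)).map
          (fun c0 => (colA t (c0+1)).insertionSort (· ≤ ·))).flatten := rfl

lemma colWordL_incr (t : List (List ℕ)) :
    colWordL (incr t) = (colWordL t).map (· + 1) := by
  rw [colWordL_def, colWordL_def, colMax_incr, List.map_flatten, List.map_map]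
  congr 1
  refine List.map_congr_left (fun c0 _ => ?_)
  simp only [Function.comp_apply]
  rw [colA_incr, sort_map_succ]

/-! ### main slide lemma for colWordL -/

lemma mem_colA (t : List (List ℕ)) (c y : ℕ) (hy : y ∈ colA t c) :
    ∃ row ∈ t, y ∈ row := by
  rw [colA] at hy
  obtain ⟨row, hr, hget⟩ := List.mem_filterMap.mp hy
  exact ⟨row, hr, by
    obtain ⟨h, hh⟩ := List.getElem?_eq_some_iff.mp hget
    exact hh ▸ List.getElem_mem h⟩

lemma colWordL_addBoxCol (t : List (List ℕ)) (a : ℕ) (ha : 1 ≤ a)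
    (hadd : Addable a t)
    (hsort : (t.map List.length).Pairwise (· ≥ ·))
    (hne : ∀ row ∈ t, row ≠ [])
    (hpos : ∀ row ∈ t, ∀ x ∈ row, 1 ≤ x) :
    colWordL (addBoxCol a 1 t)
      = ins (((List.range (a-1)).map (fun c0 => (colA t (c0+1)).length)).sum) 1
          (colWordL t) := by
  have hM : colMax (addBoxCol a 1 t) = max a (colMax t) := colMax_addBoxCol a 1 t hadd
  have hone : ∀ y ∈ colA t a, 1 ≤ y := by
    intro y hy
    obtain ⟨row, hr, hyr⟩ := mem_colA t a y hy
    exact hpos row hr y hyr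
  have haM : a ≤ colMax t + 1 := by
    rcases hadd with h1 | ⟨row, hr, hlen⟩
    · omega
    · have := length_le_colMax t row hr
      omega
  rcases Nat.lt_or_ge a (colMax t + 1) with hle | hge
  · -- a ≤ colMax t
    have hle' : a ≤ colMax t := by omega
    rw [colWordL_def, colWordL_def, hM, Nat.max_eq_right hle']
    set M := colMax t with hMdef
    set g : ℕ → List ℕ := fun c0 => (colA t (c0+1)).insertionSort (· ≤ ·) with hg
    have hj : a - 1 < ((List.range M).map g).length := by simp; omega
    have hset : (List.range M).map
          (fun c0 => (colA (addBoxCol a 1 t) (c0+1)).insertionSort (· ≤ ·))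
        = ((List.range M).map g).set (a-1) (1 :: g (a-1)) := by
      apply List.ext_getElem
      · simp
      · intro i h1 h2
        simp only [List.getElem_map, List.getElem_range, List.getElem_set,
          List.length_map, List.length_range] at h1 h2 ⊢
        split
        · next heq =>
          have hia : i + 1 = a := by omega
          rw [hia, colA_addBoxCol_self a 1 t hadd hsort, sort_append_min _ _ hone]
          simp only [hg]
          rw [show a - 1 + 1 = a by omega]
        · next hne2 =>
          rw [colA_addBoxCol_ne a 1 (i+1) t (by omega) (by omega) hadd]
    rw [hset, flatten_set _ _ _ _ hj (by
      simp only [List.getElem_map, List.getElem_range, List.length_map, List.length_range]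
      )]
    congr 1
    rw [← List.map_take, List.take_range, Nat.min_eq_left (by omega), List.length_flatten,
      List.map_map]
    congr 1
    refine List.map_congr_left (fun c0 _ => ?_)
    simp [hg, List.length_insertionSort]
  · -- a = colMax t + 1
    have heq : a = colMax t + 1 := by omega
    rw [colWordL_def, colWordL_def, hM, Nat.max_eq_left (by omega)]
    have hnilA : colA t a = [] := colA_eq_nil t a (fun row hr => by
      have := length_le_colMax t row hr; omega)
    have hrange : List.range a = List.range (colMax t) ++ [colMax t] := by
      rw [heq]; exact List.range_succ
    have hlast : (colA (addBoxCol a 1 t) (colMax t + 1)).insertionSort (· ≤ ·) = [1] := by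
      have : colMax t + 1 = a := heq.symm
      rw [this, colA_addBoxCol_self a 1 t hadd hsort, hnilA]
      rfl
    have hsame : (List.range (colMax t)).map
          (fun c0 => (colA (addBoxCol a 1 t) (c0+1)).insertionSort (· ≤ ·))
        = (List.range (colMax t)).map
          (fun c0 => (colA t (c0+1)).insertionSort (· ≤ ·)) := by
      refine List.map_congr_left (fun c0 hc0 => ?_)
      have hc0' := List.mem_range.mp hc0
      rw [colA_addBoxCol_ne a 1 (c0+1) t (by omega) (by omega) hadd]
    have hmm : ((List.range (a-1)).map (fun c0 => (colA t (c0+1)).length)).sum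
        = (((List.range (colMax t)).map
            (fun c0 => (colA t (c0+1)).insertionSort (· ≤ ·))).flatten).length := by
      rw [List.length_flatten, List.map_map]
      have : a - 1 = colMax t := by omega
      rw [this]
      congr 1
      refine List.map_congr_left (fun c0 _ => ?_)
      simp [List.length_insertionSort]
    rw [hrange, List.map_append, List.flatten_append, hsame]
    simp only [List.map_cons, List.map_nil, List.flatten_cons, List.flatten_nil,
      List.append_nil, hlast]
    rw [hmm, ins_length_self]

/-! ### TwTab recursion -/

lemma addBoxCol_incr (i v : ℕ) (t : List (List ℕ)) :
    addBoxCol i (v+1) (incr t) = incr (addBoxCol i v t) := by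
  induction t with
  | nil => simp [incr, addBoxCol]
  | cons row t ih =>
    simp only [incr, List.map_cons, addBoxCol, List.length_map] at ih ⊢
    by_cases h : row.length + 1 = i
    · rw [if_pos h, if_pos h]
      simp
    · rw [if_neg h, if_neg h, List.map_cons, ih]

lemma TwTab_nil : TwTab [] = [] := rfl

lemma TwTab_shift (a : ℕ) (w : List ℕ) :
    ∀ j, j ≤ w.length →
      (List.range j).foldl
        (fun t k => addBoxCol ((a :: w).reverse.getD k 0) (w.length + 1 - k) t) []
      = incr ((List.range j).foldl
        (fun t k => addBoxCol (w.reverse.getD k 0) (w.length - k) t) []) := by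
  intro j
  induction j with
  | zero => intro _; rfl
  | succ j ih =>
    intro hj
    rw [List.range_succ, List.foldl_append, List.foldl_append]
    simp only [List.foldl_cons, List.foldl_nil]
    rw [ih (by omega)]
    have h1 : (a :: w).reverse.getD j 0 = w.reverse.getD j 0 := by
      rw [List.reverse_cons, List.getD_append _ _ _ _ (by simp; omega)]
    have h2 : w.length + 1 - j = (w.length - j) + 1 := by omega
    rw [h1, h2, addBoxCol_incr]

lemma TwTab_cons (a : ℕ) (w : List ℕ) :
    TwTab (a :: w) = addBoxCol a 1 (incr (TwTab w)) := by
  rw [TwTab, TwTab]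
  have hlen : (a :: w).length = w.length + 1 := rfl
  rw [hlen, List.range_succ, List.foldl_append]
  simp only [List.foldl_cons, List.foldl_nil]
  rw [show (List.range w.length).foldl
      (fun t k => addBoxCol ((a :: w).reverse.getD k 0) (w.length + 1 - k) t) []
      = incr ((List.range w.length).foldl
        (fun t k => addBoxCol (w.reverse.getD k 0) (w.length - k) t) []) from
    TwTab_shift a w w.length le_rfl]
  congr 1
  · rw [List.reverse_cons, List.getD_append_right _ _ _ _ (by simp)]
    simp
  · omega

/-! ### counting lemmas -/

lemma length_colA_countP (t : List (List ℕ)) (c : ℕ) (hc : 1 ≤ c) :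
    (colA t c).length = t.countP (fun row => decide (c ≤ row.length)) := by
  induction t with
  | nil => rfl
  | cons row t ih =>
    rw [colA_cons, List.countP_cons, List.length_append, ih]
    cases hrow : row[(c-1)]? with
    | none =>
      have h1 := List.getElem?_eq_none_iff.mp hrow
      have hnc : ¬ c ≤ row.length := by omega
      simp [hnc]
    | some y =>
      obtain ⟨h1, _⟩ := List.getElem?_eq_some_iff.mp hrow
      have hcle : c ≤ row.length := by omega
      simp [hcle]
      omega

lemma exists_row_of_countP_lt (t : List (List ℕ)) (p q : List ℕ → Bool)
    (h : t.countP p < t.countP q) : ∃ row ∈ t, q row ∧ ¬ p row := by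
  by_contra hcon
  push_neg at hcon
  have hmono : t.countP q ≤ t.countP p :=
    List.countP_mono_left (fun r hr hq => hcon r hr hq)
  omega

lemma filter_lt_succ_count (w : List ℕ) (K : ℕ) :
    (w.filter (fun x => decide (x < K + 1 + 1))).length
      = (w.filter (fun x => decide (x < K + 1))).length + w.count (K+1) := by
  induction w with
  | nil => simp
  | cons b w ih =>
    simp only [List.filter_cons, List.count_cons]
    by_cases h1 : b = K+1
    · have h2 : b < K + 1 + 1 := by omega
      have h3 : ¬ b < K + 1 := by omega
      simp [h1, h2, h3] at ih ⊢
      try omega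
    · by_cases h2 : b < K+1
      · have h3 : b < K + 1 + 1 := by omega
        simp [h1, h2, h3] at ih ⊢
        try omega
      · have h3 : ¬ b < K + 1 + 1 := by omega
        simp [h1, h2, h3] at ih ⊢
        omega

lemma sum_count_eq_filter (w : List ℕ) (hpos : ∀ x ∈ w, 1 ≤ x) (K : ℕ) :
    ((List.range K).map (fun c0 => w.count (c0+1))).sum
      = (w.filter (fun x => decide (x < K+1))).length := by
  induction K with
  | zero =>
    have hnil : w.filter (fun x => decide (x < 0 + 1)) = [] := by
      refine List.filter_eq_nil_iff.mpr (fun x hx => by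
        have := hpos x hx
        simp only [decide_eq_true_eq]
        omega)
    rw [hnil]
    simp
  | succ K ih =>
    rw [List.range_succ, List.map_append, List.sum_append, ih]
    simp only [List.map_cons, List.map_nil, List.sum_cons, List.sum_nil]
    rw [filter_lt_succ_count]
    omega

/-! ### invariants of TwTab -/

lemma reverseLattice_tail {a : ℕ} {w : List ℕ} (hw : ReverseLattice (a :: w)) :
    ReverseLattice w := by
  constructor
  · exact fun x hx => hw.1 x (List.mem_cons_of_mem _ hx)
  · intro s hs j
    exact hw.2 s ((List.mem_tails _ _).mpr (((List.mem_tails _ _).mp hs).trans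
      (List.suffix_cons a w))) j

lemma incr_map_length (t : List (List ℕ)) :
    (incr t).map List.length = t.map List.length := by
  simp [incr, List.map_map, Function.comp_def]

theorem TwTab_inv (w : List ℕ) (hw : ReverseLattice w) :
    (∀ row ∈ TwTab w, row ≠ []) ∧
    ((TwTab w).map List.length).Pairwise (· ≥ ·) ∧
    (∀ row ∈ TwTab w, ∀ x ∈ row, 1 ≤ x) ∧
    (∀ c, 1 ≤ c → (colA (TwTab w) c).length = w.count c) := by
  induction w with
  | nil =>
    refine ⟨by simp [TwTab_nil], by simp [TwTab_nil], by simp [TwTab_nil],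
      fun c hc => by simp [TwTab_nil, colA_nil]⟩
  | cons a w ih =>
    have hw' : ReverseLattice w := reverseLattice_tail hw
    obtain ⟨hne, hsort, hpos, hcount⟩ := ih hw'
    have ha : 1 ≤ a := hw.1 a (List.mem_cons_self)
    have hneI : ∀ row ∈ incr (TwTab w), row ≠ [] := by
      intro row hrow
      simp only [incr, List.mem_map] at hrow
      obtain ⟨r, hr, rfl⟩ := hrow
      simpa using hne r hr
    have hsortI : ((incr (TwTab w)).map List.length).Pairwise (· ≥ ·) := by
      rw [incr_map_length]; exact hsort
    have hposI : ∀ row ∈ incr (TwTab w), ∀ x ∈ row, 1 ≤ x := by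
      intro row hrow x hx
      simp only [incr, List.mem_map] at hrow
      obtain ⟨r, _, rfl⟩ := hrow
      obtain ⟨y, _, rfl⟩ := List.mem_map.mp hx
      omega
    have hcountI : ∀ c, 1 ≤ c → (colA (incr (TwTab w)) c).length = w.count c := by
      intro c hc
      rw [colA_incr, List.length_map]
      exact hcount c hc
    have haddI : Addable a (incr (TwTab w)) := by
      by_cases h1 : a = 1
      · exact Or.inl h1
      · have hself : (a :: w) ∈ (a :: w).tails := (List.mem_tails _ _).mpr (List.suffix_refl _)
        have h2 := hw.2 (a :: w) hself (a - 2)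
        have e1 : a - 2 + 2 = a := by omega
        have e2 : a - 2 + 1 = a - 1 := by omega
        rw [e1, e2] at h2
        rw [List.count_cons, List.count_cons] at h2
        have hbeq1 : (a == a) = true := by simp
        have hbeq2 : (a == a - 1) = false := by simp; omega
        rw [hbeq1, hbeq2] at h2
        simp at h2
        have h3 : (TwTab w).countP (fun row => decide (a ≤ row.length))
            < (TwTab w).countP (fun row => decide (a - 1 ≤ row.length)) := by
          rw [← length_colA_countP _ _ (by omega), ← length_colA_countP _ _ (by omega),
            hcount a (by omega), hcount (a-1) (by omega)]
          omega
        obtain ⟨row, hr, hq, hp⟩ := exists_row_of_countP_lt _ _ _ h3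
        refine Or.inr ⟨row.map (· + 1), List.mem_map_of_mem hr, ?_⟩
        simp only [decide_eq_true_eq] at hq hp
        simp only [List.length_map]
        omega
    rw [TwTab_cons]
    refine ⟨addBoxCol_ne_nil _ _ _ hneI, addBoxCol_sorted _ _ _ haddI hneI hsortI,
      addBoxCol_pos _ _ _ le_rfl hposI, ?_⟩
    intro c hc
    by_cases hca : c = a
    · subst hca
      rw [colA_addBoxCol_self _ _ _ haddI hsortI, List.length_append, hcountI c hc,
        List.count_cons]
      simp
    · rw [colA_addBoxCol_ne _ _ _ _ hc hca haddI, hcountI c hc, List.count_cons]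
      have hbeq : (a == c) = false := by
        simp only [beq_eq_false_iff_ne, ne_eq]
        exact fun h => hca h.symm
      rw [hbeq]
      simp

/-! ### standardization side -/

lemma length_stdList (w : List ℕ) : (stdList w).length = w.length := by
  simp [stdList]

lemma getElem_stdList (w : List ℕ) (p : ℕ) (hp : p < (stdList w).length) :
    (stdList w)[p]
      = (w.filter (fun x => decide (x < w.getD p 0))).length +
        ((w.take (p + 1)).filter (fun x => decide (x = w.getD p 0))).length := by
  simp [stdList]

lemma length_invList (σ : List ℕ) : (invList σ).length = σ.length := by
  simp [invList]

lemma getElem_invList (σ : List ℕ) (k : ℕ) (hk : k < (invList σ).length) :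
    (invList σ)[k] = σ.idxOf (k+1) + 1 := by
  simp [invList]

lemma stdList_cons (a : ℕ) (w : List ℕ) :
    stdList (a :: w)
      = ((w.filter (fun x => decide (x < a))).length + 1) ::
        (stdList w).map (fun v =>
          if v ≤ (w.filter (fun x => decide (x < a))).length then v else v + 1) := by
  set m := (w.filter (fun x => decide (x < a))).length with hm
  apply List.ext_getElem
  · simp [stdList]
  · intro p h1 h2
    have hp : p < w.length + 1 := by simpa [stdList] using h1
    cases p with
    | zero =>
      rw [getElem_stdList _ 0 h1, List.getElem_cons_zero]
      simp only [List.getD_cons_zero, List.filter_cons, List.take_succ_cons, List.take_zero]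
      have h3 : (decide (a < a)) = false := by simp
      rw [h3]
      simp [hm]
    | succ p =>
      have hpw : p < w.length := by omega
      rw [getElem_stdList _ (p+1) h1, List.getElem_cons_succ]
      rw [List.getElem_map, getElem_stdList w p (by rw [length_stdList]; omega)]
      simp only [List.getD_cons_succ, List.take_succ_cons]
      rcases Nat.lt_or_ge (w.getD p 0) a with hxa | hax
      · rw [List.filter_cons_of_neg (by simp only [decide_eq_true_eq]; omega),
          List.filter_cons_of_neg (by simp only [decide_eq_true_eq]; omega)]
        have hsub : ((w.take (p+1)).filter (fun x => decide (x = w.getD p 0))).length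
            ≤ (w.filter (fun x => decide (x = w.getD p 0))).length :=
          ((List.take_sublist (p+1) w).filter _).length_le
        have hle : (w.filter (fun x => decide (x < w.getD p 0))).length
              + (w.filter (fun x => decide (x = w.getD p 0))).length
            ≤ (w.filter (fun x => decide (x < a))).length := by
          rw [filter_lt_add_eq w (w.getD p 0)]
          exact filter_length_mono w _ _ (fun x hx => by
            simp only [decide_eq_true_eq] at hx ⊢; omega)
        rw [if_pos (by omega)]
      · have hmA : (w.filter (fun x => decide (x < a))).length
            ≤ (w.filter (fun x => decide (x < w.getD p 0))).length :=
          filter_length_mono w _ _ (fun x hx => by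
            simp only [decide_eq_true_eq] at hx ⊢; omega)
        have hB1 : 1 ≤ ((w.take (p+1)).filter (fun x => decide (x = w.getD p 0))).length := by
          have hlt : p < (w.take (p+1)).length := by simp; omega
          have he : (w.take (p+1))[p] = w[p] := List.getElem_take
          have he2 : w[p] = w.getD p 0 := (List.getD_eq_getElem (l := w) (d := 0) hpw).symm
          have hmm := List.getElem_mem hlt
          rw [he, he2] at hmm
          have hmem2 : w.getD p 0 ∈ (w.take (p+1)).filter (fun x => decide (x = w.getD p 0)) :=
            List.mem_filter.mpr ⟨hmm, by simp⟩
          exact List.length_pos_iff.mpr (List.ne_nil_of_mem hmem2)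
        rw [if_neg (by omega)]
        rcases Nat.lt_or_ge a (w.getD p 0) with hlt2 | hge2
        · rw [List.filter_cons_of_pos (by simp only [decide_eq_true_eq]; omega),
            List.filter_cons_of_neg (by simp only [decide_eq_true_eq]; omega),
            List.length_cons]
          omega
        · have hax0 : a = w.getD p 0 := by omega
          rw [List.filter_cons_of_neg (by simp only [decide_eq_true_eq]; omega),
            List.filter_cons_of_pos (by simp only [decide_eq_true_eq]; omega),
            List.length_cons]
          omega

/-! ### getElem lemmas for ins -/

lemma getElem_ins_lt (m x : ℕ) (l : List ℕ) (k : ℕ) (hm : m ≤ l.length) (hk : k < m)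
    (h : k < (ins m x l).length) : (ins m x l)[k] = l[k]'(by omega) := by
  simp only [ins] at h ⊢
  rw [List.getElem_append_left (by simp; try omega)]
  exact List.getElem_take

lemma getElem_ins_self (m x : ℕ) (l : List ℕ) (hm : m ≤ l.length)
    (h : m < (ins m x l).length) : (ins m x l)[m] = x := by
  simp only [ins] at h ⊢
  rw [List.getElem_append_right (by simp; try omega)]
  simp [Nat.min_eq_left hm]

lemma getElem_ins_gt (m x : ℕ) (l : List ℕ) (k : ℕ) (hm : m ≤ l.length) (hk : m < k)
    (h : k < (ins m x l).length) : (ins m x l)[k] = l[k-1]'(by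
      simp only [ins] at h; simp at h; omega) := by
  simp only [ins] at h ⊢
  rw [List.getElem_append_right (by simp; try omega)]
  have hlt : k - (l.take m).length < (x :: l.drop m).length := by simp at h ⊢; try omega
  rw [List.getElem_cons]
  have hmin : (l.take m).length = m := by simp; omega
  rw [dif_neg (by simp at h ⊢; try omega)]
  have := List.getElem_drop (xs := l) (i := m) (j := k - (l.take m).length - 1)
    (h := by simp at h ⊢; try omega)
  rw [this]
  congr 1
  simp at h ⊢
  omega

/-! ### the inverse recursion -/

lemma invList_cons_map (σ : List ℕ) (m : ℕ) (hm : m ≤ σ.length) :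
    invList ((m+1) :: σ.map (fun v => if v ≤ m then v else v + 1))
      = ins m 1 ((invList σ).map (· + 1)) := by
  set f : ℕ → ℕ := fun v => if v ≤ m then v else v + 1 with hf
  have hinj : Function.Injective f := by
    intro x y hxy
    simp only [hf] at hxy
    split at hxy <;> split at hxy <;> omega
  have hlenL : ((invList σ).map (· + 1)).length = σ.length := by
    simp [length_invList]
  apply List.ext_getElem
  · rw [length_invList, length_ins m 1 _ (by rw [hlenL]; omega), hlenL]
    simp
  · intro k h1 h2
    have hk : k < σ.length + 1 := by simpa [invList] using h1
    rw [getElem_invList _ k h1, List.idxOf_cons]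
    rcases lt_trichotomy k m with hkm | rfl | hkm
    · have hne : ((m+1 : ℕ) == (k+1)) = false := by simp; omega
      rw [hne]
      simp only [cond_false]
      have hfk : f (k+1) = k + 1 := by simp only [hf]; rw [if_pos (by omega)]
      rw [show (k+1) = f (k+1) from hfk.symm, indexOf_map_inj f hinj]
      rw [getElem_ins_lt m 1 _ k (by rw [hlenL]; omega) hkm h2, List.getElem_map,
        getElem_invList _ k (by rw [length_invList]; omega)]
    · have heq : ((k+1 : ℕ) == (k+1)) = true := by simp
      rw [heq]
      simp only [cond_true]
      rw [getElem_ins_self k 1 _ (by rw [hlenL]; omega) h2]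
    · have hne : ((m+1 : ℕ) == (k+1)) = false := by simp; omega
      rw [hne]
      simp only [cond_false]
      have hfk : f k = k + 1 := by simp only [hf]; rw [if_neg (by omega)]
      rw [show (k+1) = f k from hfk.symm, indexOf_map_inj f hinj]
      rw [getElem_ins_gt m 1 _ k (by rw [hlenL]; omega) hkm h2, List.getElem_map,
        getElem_invList _ (k-1) (by rw [length_invList]; omega)]
      rw [show k - 1 + 1 = k by omega]

lemma invList_stdList_cons (a : ℕ) (w : List ℕ) :
    invList (stdList (a :: w))
      = ins ((w.filter (fun x => decide (x < a))).length) 1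
          ((invList (stdList w)).map (· + 1)) := by
  rw [stdList_cons]
  exact invList_cons_map (stdList w) _
    (by rw [length_stdList]; exact List.length_filter_le _ _)

/-! ### addability for TwTab -/

lemma addable_incr_TwTab (a : ℕ) (w : List ℕ) (hw : ReverseLattice (a :: w)) :
    Addable a (incr (TwTab w)) := by
  have hw' : ReverseLattice w := reverseLattice_tail hw
  obtain ⟨hne, hsort, hpos, hcount⟩ := TwTab_inv w hw'
  by_cases h1 : a = 1
  · exact Or.inl h1
  · have ha : 1 ≤ a := hw.1 a (List.mem_cons_self)
    have hself : (a :: w) ∈ (a :: w).tails := (List.mem_tails _ _).mpr (List.suffix_refl _)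
    have h2 := hw.2 (a :: w) hself (a - 2)
    have e1 : a - 2 + 2 = a := by omega
    have e2 : a - 2 + 1 = a - 1 := by omega
    rw [e1, e2] at h2
    rw [List.count_cons, List.count_cons] at h2
    have hbeq1 : (a == a) = true := by simp
    have hbeq2 : (a == a - 1) = false := by
      simp only [beq_eq_false_iff_ne, ne_eq]; omega
    rw [hbeq1, hbeq2] at h2
    simp at h2
    have h3 : (TwTab w).countP (fun row => decide (a ≤ row.length))
        < (TwTab w).countP (fun row => decide (a - 1 ≤ row.length)) := by
      rw [← length_colA_countP _ _ (by omega), ← length_colA_countP _ _ (by omega),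
        hcount a (by omega), hcount (a-1) (by omega)]
      omega
    obtain ⟨row, hr, hq, hp⟩ := exists_row_of_countP_lt _ _ _ h3
    refine Or.inr ⟨row.map (· + 1), List.mem_map_of_mem hr, ?_⟩
    simp only [decide_eq_true_eq] at hq hp
    simp only [List.length_map]
    omega

/-- Let `w = i_n ⋯ i_1` be a reverse lattice word (read left to right) and
`σ = std(w)`.  Then the column reading word of the standard reverse tableau
`T_w` equals `σ⁻¹` in one-line notation. -/
theorem colword_Tw_eq_inv_std (w : List ℕ) (hw : ReverseLattice w) :
    colWordL (TwTab w) = invList (stdList w) := by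
  induction w with
  | nil => rfl
  | cons a w ih =>
    have hw' : ReverseLattice w := reverseLattice_tail hw
    have ha : 1 ≤ a := hw.1 a (List.mem_cons_self)
    obtain ⟨hne, hsort, hpos, hcount⟩ := TwTab_inv w hw'
    have hneI : ∀ row ∈ incr (TwTab w), row ≠ [] := by
      intro row hrow
      simp only [incr, List.mem_map] at hrow
      obtain ⟨r, hr, rfl⟩ := hrow
      simpa using hne r hr
    have hsortI : ((incr (TwTab w)).map List.length).Pairwise (· ≥ ·) := by
      rw [incr_map_length]; exact hsort
    have hposI : ∀ row ∈ incr (TwTab w), ∀ x ∈ row, 1 ≤ x := by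
      intro row hrow x hx
      simp only [incr, List.mem_map] at hrow
      obtain ⟨r, _, rfl⟩ := hrow
      obtain ⟨y, _, rfl⟩ := List.mem_map.mp hx
      omega
    have haddI : Addable a (incr (TwTab w)) := addable_incr_TwTab a w hw
    rw [TwTab_cons, colWordL_addBoxCol _ a ha haddI hsortI hneI hposI, colWordL_incr,
      ih hw', invList_stdList_cons]
    congr 1
    have hcongr : (List.range (a-1)).map (fun c0 => (colA (incr (TwTab w)) (c0+1)).length)
        = (List.range (a-1)).map (fun c0 => w.count (c0+1)) := by
      refine List.map_congr_left (fun c0 _ => ?_)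
      rw [colA_incr, List.length_map, hcount (c0+1) (by omega)]
    rw [hcongr, sum_count_eq_filter w hw'.1 (a-1), show a - 1 + 1 = a by omega]


end CompJdt
end

section
/- Let T be an SSRT of shape λ with an addable node in column i+1, and let f_{i+1}(T)=T(r,i). Define T' by T'(p,q)=T(p,q) for q≠i, T'(p,i)=T(p,i) for p<r, and T'(p,i)=T(p+1,i) for p≥r (i.e., delete the entry T(r,i) and slide all entries above it in column i down one row). Then T' is an SSRT. -/
open scoped BigOperators

namespace CompJdt

lemma getD_anti {l : List ℕ} (hs : l.Pairwise (· ≥ ·)) {j k : ℕ} (hjk : j ≤ k)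
    (hk : k < l.length) : l.getD k 0 ≤ l.getD j 0 := by
  rcases eq_or_lt_of_le hjk with rfl | h
  · exact le_rfl
  · have := List.pairwise_iff_getElem.mp hs j k (lt_trans h hk) hk h
    rw [List.getD_eq_getElem l 0 hk, List.getD_eq_getElem l 0 (lt_trans h hk)]
    exact this

lemma countP_iff {i : ℕ} (hi : 0 < i) : ∀ {l : List ℕ}, l.Pairwise (· ≥ ·) → ∀ j : ℕ,
    (i ≤ l.getD j 0 ↔ j < l.countP (fun p => decide (i ≤ p)))
  | [], _, j => by simp; omega
  | a :: t, hs, 0 => by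
    simp only [List.getD_cons_zero, List.countP_cons]
    constructor
    · intro h; simp [h]
    · intro h
      by_contra hc
      have ht0 : t.countP (fun p => decide (i ≤ p)) = 0 := by
        rw [List.countP_eq_zero]
        intro x hx
        have : x ≤ a := (List.pairwise_cons.mp hs).1 x hx
        simp; omega
      simp [ht0, hc] at h
  | a :: t, hs, j + 1 => by
    have IH := countP_iff hi (List.pairwise_cons.mp hs).2 j
    simp only [List.getD_cons_succ, List.countP_cons]
    constructor
    · intro h
      have hj := IH.mp h
      have hjl : j < t.length := lt_of_lt_of_le hj (List.countP_le_length)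
      have hia : i ≤ a := by
        have hm : t.getD j 0 ∈ t := by
          rw [List.getD_eq_getElem t 0 hjl]; exact List.getElem_mem _
        exact le_trans h ((List.pairwise_cons.mp hs).1 _ hm)
      rw [decide_eq_true hia]
      simp; omega
    · intro h
      apply IH.mpr
      by_cases hia : i ≤ a
      · rw [decide_eq_true hia] at h; simp at h; omega
      · rw [decide_eq_false hia] at h; simp at h; omega

lemma le_foldr_max {l : List ℕ} {a : ℕ} (h : a ∈ l) : a ≤ l.foldr max 0 := by
  induction l with
  | nil => simp at h
  | cons b t ih =>
    rcases List.mem_cons.mp h with rfl | h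
    · exact le_max_left _ _
    · exact le_trans (ih h) (le_max_right _ _)

lemma foldr_max_mem {l : List ℕ} (h : l ≠ []) : l.foldr max 0 ∈ l := by
  induction l with
  | nil => simp at h
  | cons b t ih =>
    cases t with
    | nil => simp
    | cons c s =>
      have ht := ih (by simp)
      simp only [List.foldr_cons] at ht ⊢
      rcases max_cases b (max c (List.foldr max 0 s)) with ⟨he, _⟩ | ⟨he, _⟩ <;> rw [he]
      · exact List.mem_cons_self
      · exact List.mem_cons_of_mem _ ht

/-- Let `T` be an SSRT of shape `lam` with an addable node in column `i+1`, and
let `f_{i+1}(T) = T(r, i)`.  The filling `T'` obtained by deleting that entry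
and sliding all entries of column `i` above it down one row is again an SSRT
(of the shape obtained from `lam` by removing the topmost box of column `i`). -/
theorem tjdt_is_ssrt (lam : List ℕ) (hlam : IsPartition lam)
    (T : ℕ → ℕ → ℕ) (hT : IsSSRT lam T)
    (i : ℕ) (hi : 0 < i) (hadd : HasAddable lam (i + 1)) :
    IsSSRT (tjdtShape lam i) (tjdtFun lam T i) := by
  simp only [IsPartition] at hlam
  obtain ⟨hpos, hsort⟩ := hlam
  have hmem : i ∈ lam := by
    rcases hadd with h | h
    · omega
    · simpa using h
  set m := lam.countP (fun p => decide (i ≤ p)) with hm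
  have L1 : ∀ r : ℕ, 1 ≤ r → (InD lam r i ↔ r ≤ m) := by
    intro r hr
    have hcc := countP_iff hi hsort (r - 1)
    constructor
    · intro h; have := hcc.mp h.2.2; omega
    · intro h; exact ⟨hr, hi, hcc.mpr (by omega)⟩
  have hmlen : m ≤ lam.length := List.countP_le_length
  obtain ⟨j, hjl, hji⟩ := List.getElem_of_mem hmem
  have hjD : lam.getD j 0 = i := by rw [List.getD_eq_getElem lam 0 hjl]; exact hji
  have hjm : j < m := (countP_iff hi hsort j).mp (le_of_eq hjD.symm)
  have hm1 : 1 ≤ m := by omega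
  have L2 : lam.getD (m - 1) 0 = i := by
    have h1 : i ≤ lam.getD (m - 1) 0 := (countP_iff hi hsort (m - 1)).mpr (by omega)
    have h2 : lam.getD (m - 1) 0 ≤ lam.getD j 0 := getD_anti hsort (by omega) (by omega)
    omega
  have Lset : ∀ j : ℕ, ((lam.set (m - 1) (lam.getD (m - 1) 0 - 1)).getD j 0)
      = if j = m - 1 then i - 1 else lam.getD j 0 := by
    intro k
    rw [L2, List.getD_eq_getElem?_getD, List.getD_eq_getElem?_getD, List.getElem?_set]
    by_cases hk : m - 1 = k
    · subst hk; simp [show m - 1 < lam.length by omega]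
    · rw [if_neg hk, if_neg (fun h : k = m - 1 => hk h.symm)]
  have L3 : ∀ k : ℕ, (tjdtShape lam i).getD k 0 = if k = m - 1 then i - 1 else lam.getD k 0 := by
    intro k
    simp only [tjdtShape, ← hm]
    rcases Nat.lt_or_ge i 2 with h2 | h2
    · have hi1 : i = 1 := by omega
      have hml : m = lam.length := by
        rw [hm, List.countP_eq_length]
        intro a ha
        have := hpos a ha
        simp; omega
      have hset0 : lam.getD (m - 1) 0 - 1 = 0 := by omega
      rw [hset0, List.set_eq_take_cons_drop 0 (show m - 1 < lam.length by omega),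
        show m - 1 + 1 = m from by omega, hml, List.drop_length, List.filter_append]
      have hft : (lam.take (lam.length - 1)).filter (fun x => decide (x ≠ 0))
          = lam.take (lam.length - 1) := by
        rw [List.filter_eq_self]
        intro a ha
        have := hpos a (List.mem_of_mem_take ha)
        simp; omega
      rw [hft]
      simp only [List.filter_cons, List.filter_nil]
      norm_num
      rcases Nat.lt_or_ge k (lam.length - 1) with hk | hk
      · rw [List.getElem?_take_of_lt hk, if_neg (by omega)]
      · rw [List.getElem?_eq_none (l := lam.take (lam.length - 1)) (by simp; omega)]
        by_cases hke : k = lam.length - 1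
        · simp [hke, hi1]
        · rw [List.getElem?_eq_none (l := lam) (by omega), if_neg hke]
    · have hfeq : (lam.set (m - 1) (lam.getD (m - 1) 0 - 1)).filter (fun x => decide (x ≠ 0))
          = lam.set (m - 1) (lam.getD (m - 1) 0 - 1) := by
        rw [List.filter_eq_self]
        intro a ha
        rcases List.mem_or_eq_of_mem_set ha with h | h
        · have := hpos a h; simp; omega
        · rw [L2] at h; subst h; simp; omega
      rw [hfeq, Lset]
  have hInDmu : ∀ r c : ℕ, InD (tjdtShape lam i) r c ↔ (InD lam r c ∧ ¬(r = m ∧ c = i)) := by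
    intro r c
    by_cases hr0 : 1 ≤ r
    · by_cases hr : r = m
      · subst hr
        constructor
        · rintro ⟨h1, h2, h3⟩
          rw [L3, if_pos rfl] at h3
          exact ⟨⟨h1, h2, by omega⟩, by omega⟩
        · rintro ⟨⟨h1, h2, h3⟩, h4⟩
          rw [L2] at h3
          exact ⟨h1, h2, by rw [L3, if_pos rfl]; omega⟩
      · have hne : r - 1 ≠ m - 1 := by omega
        constructor
        · rintro ⟨h1, h2, h3⟩
          rw [L3, if_neg hne] at h3
          exact ⟨⟨h1, h2, h3⟩, by tauto⟩
        · rintro ⟨⟨h1, h2, h3⟩, h4⟩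
          exact ⟨h1, h2, by rw [L3, if_neg hne]; exact h3⟩
    · constructor
      · rintro ⟨h1, -, -⟩; omega
      · rintro ⟨⟨h1, -, -⟩, -⟩; omega
  -- facts about fRow
  set flt := (List.range (lam.length + 1)).filter (fun r =>
    decide (InD lam r i ∧ (¬ InD lam (r - 1) (i + 1) ∨ T r i < T (r - 1) (i + 1)))) with hflt
  have hr0def : fRow lam T i = flt.foldr max 0 := rfl
  set r0 := fRow lam T i with hr0
  have h1mem : (1 : ℕ) ∈ flt := by
    rw [hflt, List.mem_filter]
    refine ⟨List.mem_range.mpr (by omega), ?_⟩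
    rw [decide_eq_true_eq]
    refine ⟨(L1 1 le_rfl).mpr hm1, Or.inl ?_⟩
    rintro ⟨h, -⟩; omega
  have hr0mem := foldr_max_mem (List.ne_nil_of_mem h1mem)
  rw [← hr0def] at hr0mem
  rw [hflt, List.mem_filter, decide_eq_true_eq] at hr0mem
  obtain ⟨-, hInDr0, -⟩ := hr0mem
  have hr01 : 1 ≤ r0 := by rw [hr0def]; exact le_foldr_max h1mem
  have hr0m : r0 ≤ m := (L1 r0 hr01).mp hInDr0
  have Lmax : ∀ r, r0 < r → r ≤ m → InD lam (r - 1) (i + 1) ∧ T (r - 1) (i + 1) ≤ T r i := by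
    intro r hrr hrm
    by_contra hcon
    have hr1 : 1 ≤ r := by omega
    have hprd : InD lam r i ∧ (¬ InD lam (r - 1) (i + 1) ∨ T r i < T (r - 1) (i + 1)) := by
      refine ⟨(L1 r hr1).mpr hrm, ?_⟩
      by_cases hI : InD lam (r - 1) (i + 1)
      · right; by_contra h'; exact hcon ⟨hI, by omega⟩
      · left; exact hI
    have hmemr : r ∈ flt := by
      rw [hflt, List.mem_filter]
      exact ⟨List.mem_range.mpr (by omega), decide_eq_true hprd⟩
    have := le_foldr_max hmemr
    rw [← hr0def] at this
    omega
  -- unpack SSRT hypotheses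
  have hskew : ∀ (l : List ℕ) (r c : ℕ), InSkewP l [] r c ↔ InD l r c := by
    intro l r c
    constructor
    · exact fun h => h.1
    · intro h
      refine ⟨h, ?_⟩
      rintro ⟨-, h1, h2⟩
      simp at h2; omega
  simp only [IsSSRT, IsSSRTSkew, hskew] at hT ⊢
  obtain ⟨hT0, hTpos, hTrow, hTcol⟩ := hT
  refine ⟨?_, ?_, ?_, ?_⟩
  · -- zero outside
    intro p q hnot
    simp only [tjdtFun]
    split
    next h =>
      obtain ⟨hq, hpr⟩ := h
      rw [hq] at hnot ⊢
      apply hT0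
      intro hIn
      have hp1 : p + 1 ≤ m := (L1 (p + 1) (by omega)).mp hIn
      exact hnot ((hInDmu p i).mpr ⟨(L1 p (by omega)).mpr (by omega), by omega⟩)
    next h =>
      apply hT0
      intro hIn
      apply hnot
      refine (hInDmu p q).mpr ⟨hIn, ?_⟩
      rintro ⟨rfl, rfl⟩
      exact h ⟨rfl, hr0m⟩
  · -- positive inside
    intro p q hIn
    obtain ⟨hlam', hne⟩ := (hInDmu p q).mp hIn
    simp only [tjdtFun]
    split
    next h =>
      obtain ⟨hq, hpr⟩ := h
      rw [hq] at hlam' hne ⊢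
      have hpm : p ≤ m := (L1 p hlam'.1).mp hlam'
      have hpne : p ≠ m := fun h' => hne ⟨h', rfl⟩
      exact hTpos _ _ ((L1 (p + 1) (by omega)).mpr (by omega))
    next h =>
      exact hTpos _ _ hlam'
  · -- rows weakly decrease
    intro p c hc hIc' hIc1'
    obtain ⟨hIc, hnec⟩ := (hInDmu p c).mp hIc'
    obtain ⟨hIc1, hnec1⟩ := (hInDmu p (c + 1)).mp hIc1'
    have hp1 : 1 ≤ p := hIc.1
    simp only [tjdtFun]
    by_cases h1 : c + 1 = i
    · by_cases h2 : r0 ≤ p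
      · rw [if_pos ⟨h1, h2⟩, if_neg (by rintro ⟨rfl, -⟩; omega)]
        have hpi : InD lam p i := by rw [← h1]; exact hIc1
        have hpm : p ≤ m := (L1 p hp1).mp hpi
        have hpnem : p ≠ m := by rintro rfl; exact hnec1 ⟨rfl, h1⟩
        have hIn1 : InD lam (p + 1) (c + 1) := by
          rw [h1]; exact (L1 (p + 1) (by omega)).mpr (by omega)
        have hA := hTcol p (c + 1) hp1 hIc1 hIn1
        have hB := hTrow p c hc hIc hIc1
        omega
      · rw [if_neg (by rintro ⟨-, h'⟩; omega), if_neg (by rintro ⟨rfl, -⟩; omega)]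
        exact hTrow p c hc hIc hIc1
    · by_cases h2 : c = i
      · by_cases h3 : r0 ≤ p
        · rw [if_neg (by rintro ⟨h', -⟩; omega), if_pos ⟨h2, h3⟩, h2]
          have hpm : p ≤ m := (L1 p hp1).mp (h2 ▸ hIc)
          have hpnem : p ≠ m := by rintro rfl; exact hnec ⟨rfl, h2⟩
          have := (Lmax (p + 1) (by omega) (by omega)).2
          simpa using this
        · rw [if_neg (by rintro ⟨h', -⟩; omega), if_neg (by rintro ⟨-, h'⟩; omega)]
          exact hTrow p _ hc hIc hIc1
      · rw [if_neg (by rintro ⟨h', -⟩; exact h1 h'), if_neg (by rintro ⟨h', -⟩; exact h2 h')]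
        exact hTrow p c hc hIc hIc1
  · -- columns strictly decrease
    intro p c hp hIp' hIp1'
    obtain ⟨hIp, -⟩ := (hInDmu p c).mp hIp'
    obtain ⟨hIp1, hne1⟩ := (hInDmu (p + 1) c).mp hIp1'
    simp only [tjdtFun]
    by_cases hci : c = i
    · have hpm : p + 1 ≤ m := (L1 (p + 1) (by omega)).mp (hci ▸ hIp1)
      have hpne : p + 1 ≠ m := fun h' => hne1 ⟨h', hci⟩
      have hIn2 : InD lam (p + 1 + 1) c := by
        rw [hci]; exact (L1 (p + 1 + 1) (by omega)).mpr (by omega)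
      have hA := hTcol p c hp hIp hIp1
      have hB := hTcol (p + 1) c (by omega) hIp1 hIn2
      rcases le_or_gt r0 p with h | h
      · rw [if_pos ⟨hci, by omega⟩, if_pos ⟨hci, h⟩]
        exact hB
      · by_cases h2 : r0 ≤ p + 1
        · rw [if_pos ⟨hci, h2⟩, if_neg (by rintro ⟨-, h'⟩; omega)]
          exact lt_trans hB hA
        · rw [if_neg (by rintro ⟨-, h'⟩; omega), if_neg (by rintro ⟨-, h'⟩; omega)]
          exact hA
    · rw [if_neg (by rintro ⟨h', -⟩; exact hci h'), if_neg (by rintro ⟨h', -⟩; exact hci h')]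
      exact hTcol p c hp hIp hIp1

end CompJdt
end
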